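/- The 2-sphere is unicoherent: if A and B are closed connected subsets of the unit sphere S² in three-dimensional Euclidean space with A ∪ B = S², then A ∩ B is connected. -/

import Mathlib

open Set Complex Real Finset


theorem glue_aux {α β : Type*} [TopologicalSpace α] [TopologicalSpace β]
    {s₁ s₂ : Set α} {f g : α → β} (h₁ : IsClosed s₁) (h₂ : IsClosed s₂)
    (hf : ContinuousOn f s₁) (hg : ContinuousOn g s₂)
    (hfg : ∀ x ∈ s₁ ∩ s₂, f x = g x)
    (p : α → Prop) [DecidablePred p]
    (hp : ∀ x ∈ s₁ ∪ s₂, p x → x ∈ s₁) (hp' : ∀ x ∈ s₁ ∪ s₂, ¬ p x → x ∈ s₂) :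
    ContinuousOn (fun x => if p x then f x else g x) (s₁ ∪ s₂) := by
  set F := fun x => if p x then f x else g x with hF
  have e1 : ∀ y ∈ s₁, F y = f y := by
    intro y hy
    by_cases hpy : p y
    · simp [hF, hpy]
    · have hy2 : y ∈ s₂ := hp' y (Or.inl hy) hpy
      simp [hF, hpy, (hfg y ⟨hy, hy2⟩).symm]
  have e2 : ∀ y ∈ s₂, F y = g y := by
    intro y hy
    by_cases hpy : p y
    · have hy1 : y ∈ s₁ := hp y (Or.inr hy) hpy
      simp [hF, hpy, hfg y ⟨hy1, hy⟩]
    · simp [hF, hpy]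
  intro x hx
  have c1 : ContinuousWithinAt F s₁ x := by
    by_cases hx1 : x ∈ s₁
    · exact ((hf x hx1).congr e1 (e1 x hx1))
    · exact continuousWithinAt_of_notMem_closure (by rwa [h₁.closure_eq])
  have c2 : ContinuousWithinAt F s₂ x := by
    by_cases hx2 : x ∈ s₂
    · exact ((hg x hx2).congr e2 (e2 x hx2))
    · exact continuousWithinAt_of_notMem_closure (by rwa [h₂.closure_eq])
  exact c1.union c2


theorem subsingleton_of_int_multiples {T : Set ℝ} (hT : IsPreconnected T)
    (h : ∀ a ∈ T, ∃ n : ℤ, a = n * (2 * π)) : T.Subsingleton := by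
  intro a ha b hb
  by_contra hne
  wlog hab : a < b generalizing a b
  · exact this hb ha (Ne.symm hne) (lt_of_le_of_ne (not_lt.mp hab) (Ne.symm hne))
  obtain ⟨m, rfl⟩ := h a ha
  obtain ⟨n, rfl⟩ := h b hb
  have hmn : m < n := by
    have h2 : (0:ℝ) < 2 * π := by positivity
    have : (m:ℝ) < (n:ℝ) := lt_of_mul_lt_mul_right (by simpa [mul_comm] using hab) h2.le
    exact_mod_cast this
  have hmid : (m : ℝ) * (2 * π) + π ∈ Icc ((m:ℝ) * (2*π)) ((n:ℝ)*(2*π)) := by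
    constructor
    · nlinarith [pi_pos]
    · have : (m : ℝ) + 1 ≤ n := by exact_mod_cast hmn
      nlinarith [pi_pos]
  have := hT.Icc_subset ha hb hmid
  obtain ⟨k, hk⟩ := h _ this
  have : (2*m+1 : ℝ) * π = 2*k*π := by linarith [hk]
  have h2 : (2*m+1 : ℝ) = 2*k := mul_right_cancel₀ Real.pi_ne_zero this
  have : (2*m+1 : ℤ) = 2*k := by exact_mod_cast h2
  omega

theorem const_of_exp_eq_one {α : Type*} [TopologicalSpace α] {s : Set α}
    (hs : IsPreconnected s) {φ : α → ℂ} (hφ : ContinuousOn φ s)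
    (h1 : ∀ x ∈ s, Complex.exp (φ x) = 1) :
    ∀ x ∈ s, ∀ y ∈ s, φ x = φ y := by
  have hlat : ∀ x ∈ s, ∃ n : ℤ, φ x = n * (2 * π * I) := by
    intro x hx; exact Complex.exp_eq_one_iff.mp (h1 x hx)
  have him : ∀ x ∈ s, ∃ n : ℤ, (φ x).im = n * (2 * π) := by
    intro x hx; obtain ⟨n, hn⟩ := hlat x hx
    exact ⟨n, by rw [hn]; simp [mul_comm, mul_assoc, mul_left_comm]⟩
  have hre : ∀ x ∈ s, (φ x).re = 0 := by
    intro x hx; obtain ⟨n, hn⟩ := hlat x hx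
    rw [hn]; simp
  have hTconn : IsPreconnected ((fun x => (φ x).im) '' s) :=
    hs.image _ (Complex.continuous_im.comp_continuousOn hφ)
  have hsub := subsingleton_of_int_multiples hTconn (by rintro a ⟨x, hx, rfl⟩; exact him x hx)
  intro x hx y hy
  apply Complex.ext
  · rw [hre x hx, hre y hy]
  · exact hsub ⟨x, hx, rfl⟩ ⟨y, hy, rfl⟩


theorem exists_log_starShaped {E : Type*} [NormedAddCommGroup E] [NormedSpace ℝ E]
    {K : Set E} (hKc : IsCompact K)
    (hstar : ∀ x ∈ K, ∀ t : ℝ, t ∈ Set.Icc (0:ℝ) 1 → t • x ∈ K)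
    {g : E → ℂ} (hg : ContinuousOn g K) (hnorm : ∀ x ∈ K, ‖g x‖ = 1) :
    ∃ h : E → ℂ, ContinuousOn h K ∧ ∀ x ∈ K, Complex.exp (h x) = g x := by
  rcases K.eq_empty_or_nonempty with rfl | ⟨x₀, hx₀⟩
  · exact ⟨0, continuousOn_empty _, fun x hx => absurd hx (notMem_empty x)⟩
  have h0K : (0 : E) ∈ K := by simpa using hstar x₀ hx₀ 0 ⟨le_refl 0, zero_le_one⟩
  have hg0 : g 0 ≠ 0 := by
    intro h; have := hnorm 0 h0K; rw [h] at this; simp at this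
  set F : ℝ × E → ℂ := fun p => g (p.1 • p.2) with hF
  have hmaps : ∀ p ∈ Set.Icc (0:ℝ) 1 ×ˢ K, p.1 • p.2 ∈ K := fun p hp =>
    hstar p.2 hp.2 p.1 hp.1
  have hFc : ContinuousOn F (Set.Icc (0:ℝ) 1 ×ˢ K) :=
    hg.comp (continuous_fst.smul continuous_snd).continuousOn hmaps
  have hScomp : IsCompact (Set.Icc (0:ℝ) 1 ×ˢ K) := isCompact_Icc.prod hKc
  have hUC := hScomp.uniformContinuousOn_of_continuous hFc
  rw [Metric.uniformContinuousOn_iff] at hUC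
  obtain ⟨δ, hδ, hδ'⟩ := hUC 1 one_pos
  obtain ⟨n, hn⟩ := exists_nat_one_div_lt hδ
  set N := n + 1 with hN
  have hNn : (N:ℝ) = (n:ℝ) + 1 := by rw [hN]; push_cast; ring
  have hNpos : 0 < (N:ℝ) := by rw [hNn]; positivity
  set t : ℕ → ℝ := fun j => (j : ℝ) / N with ht
  have htmem : ∀ j ≤ N, t j ∈ Set.Icc (0:ℝ) 1 := by
    intro j hj
    refine ⟨by positivity, by rw [div_le_one hNpos]; exact_mod_cast hj⟩
  set a : E → ℕ → ℂ := fun x j => g (t j • x) with ha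
  have haK : ∀ x ∈ K, ∀ j ≤ N, t j • x ∈ K := fun x hx j hj => hstar x hx _ (htmem j hj)
  have hanorm : ∀ x ∈ K, ∀ j ≤ N, ‖a x j‖ = 1 := fun x hx j hj => hnorm _ (haK x hx j hj)
  have hane : ∀ x ∈ K, ∀ j ≤ N, a x j ≠ 0 := by
    intro x hx j hj h0
    have := hanorm x hx j hj
    rw [h0] at this; simp at this
  have haconj : ∀ x ∈ K, ∀ j ≤ N, a x j * (starRingEnd ℂ) (a x j) = 1 := by
    intro x hx j hj
    rw [Complex.mul_conj]
    have h1 : Complex.normSq (a x j) = 1 := by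
      rw [Complex.normSq_eq_norm_sq, hanorm x hx j hj]
      norm_num
    rw [h1]; norm_num
  have hclose : ∀ x ∈ K, ∀ j < N, dist (a x (j+1)) (a x j) < 1 := by
    intro x hx j hj
    have h1 : (t (j+1), x) ∈ Set.Icc (0:ℝ) 1 ×ˢ K := ⟨htmem _ hj, hx⟩
    have h2 : (t j, x) ∈ Set.Icc (0:ℝ) 1 ×ˢ K := ⟨htmem _ hj.le, hx⟩
    have hd : dist (t (j+1), x) (t j, x) < δ := by
      rw [Prod.dist_eq]
      simp only [dist_self]
      have hsub : t (j+1) - t j = 1 / N := by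
        rw [ht]; push_cast; ring
      have he : dist (t (j+1)) (t j) = 1 / N := by
        rw [Real.dist_eq, hsub, abs_of_pos (by positivity)]
      rw [he, max_eq_left (by positivity), hNn]
      exact hn
    have h3 := hδ' _ h1 _ h2 hd
    simp only [hF] at h3
    simp only [ha]
    exact h3
  set w : E → ℕ → ℂ := fun x j => a x (j+1) * (starRingEnd ℂ) (a x j) with hw
  have hwnear : ∀ x ∈ K, ∀ j < N, ‖w x j - 1‖ < 1 := by
    intro x hx j hj
    have hfac : w x j - 1 = (a x (j+1) - a x j) * (starRingEnd ℂ) (a x j) := by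
      have h1 := haconj x hx j hj.le
      show a x (j+1) * (starRingEnd ℂ) (a x j) - 1 = _
      rw [← h1]; ring
    rw [hfac, norm_mul, RCLike.norm_conj, hanorm x hx j hj.le, mul_one, ← dist_eq_norm]
    exact hclose x hx j hj
  have hwslit : ∀ x ∈ K, ∀ j < N, w x j ∈ Complex.slitPlane := by
    intro x hx j hj
    have := Complex.mem_slitPlane_of_norm_lt_one (hwnear x hx j hj)
    simpa using this
  have hwne : ∀ x ∈ K, ∀ j < N, w x j ≠ 0 := by
    intro x hx j hj h0
    have := hwnear x hx j hj
    rw [h0] at this; simp at this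
  refine ⟨fun x => Complex.log (g 0) + ∑ j ∈ Finset.range N, Complex.log (w x j), ?_, ?_⟩
  · apply ContinuousOn.add continuousOn_const
    apply continuousOn_finset_sum
    intro j hj
    rw [Finset.mem_range] at hj
    have hwc : ContinuousOn (fun x => w x j) K := by
      have c1 : ContinuousOn (fun x => g (t (j+1) • x)) K :=
        hg.comp (continuous_const_smul _).continuousOn (fun x hx => haK x hx (j+1) hj)
      have c2 : ContinuousOn (fun x => g (t j • x)) K :=
        hg.comp (continuous_const_smul _).continuousOn (fun x hx => haK x hx j hj.le)
      simp only [hw, ha]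
      exact c1.mul (continuous_star.comp_continuousOn c2)
    intro x hx
    exact ContinuousAt.comp_continuousWithinAt (g := Complex.log) (f := fun y => w y j)
      (continuousAt_clog (hwslit x hx j hj)) (hwc x hx)
  · intro x hx
    have key : ∀ m, m ≤ N → Complex.exp (Complex.log (g 0) +
        ∑ j ∈ Finset.range m, Complex.log (w x j)) = a x m := by
      intro m
      induction m with
      | zero =>
        intro _
        simp only [Finset.range_zero, Finset.sum_empty, add_zero]
        have h00 : a x 0 = g 0 := by
          have ht0 : t 0 = 0 := by rw [ht]; norm_num
          simp only [ha, ht0, zero_smul]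
        rw [h00]
        exact Complex.exp_log hg0
      | succ m ih =>
        intro hm
        have hmN : m < N := hm
        rw [Finset.sum_range_succ, ← add_assoc, Complex.exp_add,
          ih hmN.le, Complex.exp_log (hwne x hx m hmN)]
        simp only [hw]
        calc a x m * (a x (m+1) * (starRingEnd ℂ) (a x m))
            = a x (m+1) * (a x m * (starRingEnd ℂ) (a x m)) := by ring
          _ = a x (m+1) := by rw [haconj x hx m hmN.le, mul_one]
    have hkey := key N le_rfl
    rw [hkey]
    have htN : t N = 1 := by rw [ht]; field_simp
    simp only [ha, htN, one_smul]


noncomputable section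
abbrev E3 := EuclideanSpace ℝ (Fin 3)

def pl (x : E3) : E3 := WithLp.toLp 2 (fun i : Fin 3 => if i = 2 then 0 else x i)

def lft (s : ℝ) (y : E3) : E3 :=
  WithLp.toLp 2 (fun i : Fin 3 => if i = 2 then s * Real.sqrt (1 - ((y 0)^2 + (y 1)^2)) else y i)

lemma hcoord (i : Fin 3) : Continuous fun x : E3 => x i := (EuclideanSpace.proj i).continuous

lemma norm3 (x : E3) : ‖x‖ = Real.sqrt ((x 0)^2 + (x 1)^2 + (x 2)^2) := by
  rw [EuclideanSpace.norm_eq]; simp [Fin.sum_univ_three]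

lemma pl_cont : Continuous pl := by
  unfold pl
  apply (PiLp.continuous_toLp 2 _).comp
  apply continuous_pi
  intro i
  by_cases h : i = 2
  · simp only [if_pos h]; exact continuous_const
  · simp only [if_neg h]; exact hcoord i

lemma lft_cont (s : ℝ) : Continuous (lft s) := by
  unfold lft
  apply (PiLp.continuous_toLp 2 _).comp
  apply continuous_pi
  intro i
  by_cases h : i = 2
  · simp only [if_pos h]
    exact continuous_const.mul (Real.continuous_sqrt.comp
      (continuous_const.sub (((hcoord 0).pow 2).add ((hcoord 1).pow 2))))
  · simp only [if_neg h]
    exact hcoord i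

end

noncomputable section
open Metric in
lemma sphere_sum (x : E3) (hx : x ∈ Metric.sphere (0:E3) 1) :
    (x 0)^2 + (x 1)^2 + (x 2)^2 = 1 := by
  rw [mem_sphere_zero_iff_norm, norm3] at hx
  exact Real.sqrt_eq_one.mp hx

def Kd : Set E3 := {y | y 2 = 0 ∧ ‖y‖ ≤ 1}

lemma Kd_closed : IsClosed Kd :=
  (isClosed_eq (hcoord 2) continuous_const).inter (isClosed_le continuous_norm continuous_const)

lemma Kd_compact : IsCompact Kd :=
  (isCompact_closedBall (0:E3) 1).of_isClosed_subset Kd_closed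
    (fun y hy => by simpa [Metric.mem_closedBall, dist_zero_right] using hy.2)

lemma Kd_star : ∀ y ∈ Kd, ∀ t : ℝ, t ∈ Set.Icc (0:ℝ) 1 → t • y ∈ Kd := by
  rintro y ⟨hy2, hyn⟩ t ⟨ht0, ht1⟩
  constructor
  · show t * y 2 = 0
    rw [hy2, mul_zero]
  · rw [norm_smul, Real.norm_eq_abs, _root_.abs_of_nonneg ht0]
    calc t * ‖y‖ ≤ 1 * 1 := mul_le_mul ht1 hyn (norm_nonneg y) zero_le_one
      _ = 1 := mul_one 1

lemma Kd_q_le (y : E3) (hy : y ∈ Kd) : (y 0)^2 + (y 1)^2 ≤ 1 := by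
  obtain ⟨hy2, hyn⟩ := hy
  rw [norm3, hy2] at hyn
  have h0 : (0:ℝ) ≤ (y 0)^2 + (y 1)^2 := by positivity
  nlinarith [Real.sq_sqrt (by positivity : (0:ℝ) ≤ (y 0)^2 + (y 1)^2 + 0^2),
    Real.sqrt_nonneg ((y 0)^2 + (y 1)^2 + 0^2)]

lemma lft_mem_sphere (s : ℝ) (hs : s^2 = 1) (y : E3) (hy : y ∈ Kd) :
    lft s y ∈ Metric.sphere (0:E3) 1 := by
  have hq := Kd_q_le y hy
  rw [mem_sphere_zero_iff_norm, norm3]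
  have h0 : lft s y 0 = y 0 := by simp [lft]
  have h1 : lft s y 1 = y 1 := by simp [lft]
  have h2 : lft s y 2 = s * Real.sqrt (1 - ((y 0)^2 + (y 1)^2)) := by simp [lft]
  rw [h0, h1, h2, mul_pow, hs, one_mul,
    Real.sq_sqrt (by linarith : (0:ℝ) ≤ 1 - ((y 0)^2 + (y 1)^2))]
  norm_num

lemma pl_mem_Kd (x : E3) (hx : x ∈ Metric.sphere (0:E3) 1) : pl x ∈ Kd := by
  have hs := sphere_sum x hx
  constructor
  · simp [pl]
  · rw [norm3]
    have h0 : pl x 0 = x 0 := by simp [pl]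
    have h1 : pl x 1 = x 1 := by simp [pl]
    have h2 : pl x 2 = 0 := by simp [pl]
    rw [h0, h1, h2]
    rw [show ((0:ℝ))^2 = 0 by norm_num, add_zero]
    rw [show (1:ℝ) = Real.sqrt 1 from (Real.sqrt_one).symm]
    apply Real.sqrt_le_sqrt
    nlinarith [sq_nonneg (x 2)]

lemma lft_pl (s : ℝ) (hs1 : s^2 = 1) (x : E3) (hx : x ∈ Metric.sphere (0:E3) 1)
    (hsx : s * x 2 = |x 2|) : lft s (pl x) = x := by
  have hs := sphere_sum x hx
  ext i
  by_cases h : i = 2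
  · subst h
    show (if (2:Fin 3) = 2 then s * Real.sqrt (1 - ((pl x 0)^2 + (pl x 1)^2)) else pl x 2) = x 2
    rw [if_pos rfl]
    have h0 : pl x 0 = x 0 := by simp [pl]
    have h1 : pl x 1 = x 1 := by simp [pl]
    rw [h0, h1]
    have : 1 - ((x 0)^2 + (x 1)^2) = (x 2)^2 := by linarith
    rw [this, Real.sqrt_sq_eq_abs, ← hsx, ← mul_assoc, ← sq, hs1, one_mul]
  · show (if i = 2 then _ else pl x i) = x i
    rw [if_neg h]
    simp [pl, if_neg h]
end

noncomputable section
def circ (θ : ℝ) : E3 := WithLp.toLp 2 (fun i : Fin 3 => if i = 0 then Real.cos θ else if i = 1 then Real.sin θ else 0)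

def eqt : Set E3 := {x | x ∈ Metric.sphere (0:E3) 1 ∧ x 2 = 0}

lemma circ_cont : Continuous circ := by
  unfold circ
  apply (PiLp.continuous_toLp 2 _).comp
  apply continuous_pi
  intro i
  by_cases h0 : i = 0
  · simp only [if_pos h0]; exact Real.continuous_cos
  · simp only [if_neg h0]
    by_cases h1 : i = 1
    · simp only [if_pos h1]; exact Real.continuous_sin
    · simp only [if_neg h1]; exact continuous_const

lemma circ_mem (θ : ℝ) : circ θ ∈ eqt := by
  have h0 : circ θ 0 = Real.cos θ := by simp [circ]
  have h1 : circ θ 1 = Real.sin θ := by simp [circ]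
  have h2 : circ θ 2 = 0 := by simp [circ]
  constructor
  · rw [mem_sphere_zero_iff_norm, norm3, h0, h1, h2]
    rw [show Real.cos θ ^2 + Real.sin θ^2 + 0^2 = 1 by
      have := Real.cos_sq_add_sin_sq θ; nlinarith]
    exact Real.sqrt_one
  · exact h2

lemma eqt_eq_range : eqt = Set.range circ := by
  apply Set.Subset.antisymm
  · rintro x ⟨hx, hx2⟩
    have hs := sphere_sum x hx
    rw [hx2] at hs
    have hq : (x 0)^2 + (x 1)^2 = 1 := by nlinarith
    set z : ℂ := ⟨x 0, x 1⟩ with hz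
    have habs : ‖z‖ = 1 := by
      rw [Complex.norm_def, Complex.normSq_mk]
      rw [show x 0 * x 0 + x 1 * x 1 = 1 by nlinarith]
      exact Real.sqrt_one
    have hzne : z ≠ 0 := by
      intro h; rw [h] at habs; simp at habs
    refine ⟨Complex.arg z, ?_⟩
    have hc : Real.cos (Complex.arg z) = x 0 := by
      rw [Complex.cos_arg hzne, habs]; simp [hz]
    have hsn : Real.sin (Complex.arg z) = x 1 := by
      rw [Complex.sin_arg, habs]; simp [hz]
    ext i
    unfold circ
    rw [PiLp.toLp_apply]
    by_cases h0 : i = 0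
    · subst h0; rw [if_pos rfl]; exact hc
    · rw [if_neg h0]
      by_cases h1 : i = 1
      · subst h1; rw [if_pos rfl]; exact hsn
      · rw [if_neg h1]
        have : i = 2 := by omega
        subst this; exact hx2.symm
  · rintro _ ⟨θ, rfl⟩
    exact circ_mem θ

lemma eqt_preconnected : IsPreconnected eqt := by
  rw [eqt_eq_range]
  exact isPreconnected_range circ_cont

theorem exists_log_sphere {g : E3 → ℂ}
    (hg : ContinuousOn g (Metric.sphere (0:E3) 1))
    (hnorm : ∀ x ∈ Metric.sphere (0:E3) 1, ‖g x‖ = 1) :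
    ∃ h : E3 → ℂ, ContinuousOn h (Metric.sphere (0:E3) 1) ∧
      ∀ x ∈ Metric.sphere (0:E3) 1, Complex.exp (h x) = g x := by
  have hKc := Kd_compact
  have hKstar := Kd_star
  -- logs on the two hemispheres (pulled back to the disk Kd)
  have mk : ∀ s : ℝ, s^2 = 1 → ∃ h : E3 → ℂ, ContinuousOn h Kd ∧
      ∀ y ∈ Kd, Complex.exp (h y) = g (lft s y) := by
    intro s hs
    have hmem : ∀ y ∈ Kd, lft s y ∈ Metric.sphere (0:E3) 1 := lft_mem_sphere s hs
    have hGc : ContinuousOn (fun y => g (lft s y)) Kd :=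
      hg.comp (lft_cont s).continuousOn hmem
    have hGn : ∀ y ∈ Kd, ‖g (lft s y)‖ = 1 := fun y hy => hnorm _ (hmem y hy)
    exact exists_log_starShaped hKc hKstar hGc hGn
  obtain ⟨h₁, h₁c, h₁e⟩ := mk 1 (by norm_num)
  obtain ⟨h₂, h₂c, h₂e⟩ := mk (-1) (by norm_num)
  -- on the equator, both lifts are the identity
  have heqt_lft : ∀ s : ℝ, s^2 = 1 → ∀ x ∈ eqt, lft s (pl x) = x := by
    intro s hs x hx
    apply lft_pl s hs x hx.1
    rw [hx.2, mul_zero, abs_zero]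
  have hplK : ∀ x ∈ Metric.sphere (0:E3) 1, pl x ∈ Kd := pl_mem_Kd
  -- difference of the two logs on the equator
  have hd1 : ∀ x ∈ eqt, Complex.exp (h₁ (pl x) - h₂ (pl x)) = 1 := by
    intro x hx
    have hgx : g x ≠ 0 := by
      intro h; have := hnorm x hx.1; rw [h] at this; simp at this
    rw [Complex.exp_sub, h₁e _ (hplK x hx.1), h₂e _ (hplK x hx.1),
      heqt_lft 1 (by norm_num) x hx, heqt_lft (-1) (by norm_num) x hx, div_self hgx]
  have hdc : ContinuousOn (fun x => h₁ (pl x) - h₂ (pl x)) eqt := by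
    have hmaps : Set.MapsTo pl eqt Kd := fun x hx => hplK x hx.1
    exact (h₁c.comp pl_cont.continuousOn hmaps).sub (h₂c.comp pl_cont.continuousOn hmaps)
  have hconst := const_of_exp_eq_one eqt_preconnected hdc hd1
  set c : ℂ := h₁ (pl (circ 0)) - h₂ (pl (circ 0)) with hc
  have hexpc : Complex.exp c = 1 := hd1 _ (circ_mem 0)
  have hdall : ∀ x ∈ eqt, h₁ (pl x) - h₂ (pl x) = c :=
    fun x hx => hconst x hx _ (circ_mem 0)
  -- glue
  set s₁ : Set E3 := Metric.sphere (0:E3) 1 ∩ {x | 0 ≤ x 2} with hs₁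
  set s₂ : Set E3 := Metric.sphere (0:E3) 1 ∩ {x | x 2 ≤ 0} with hs₂
  have hs₁c : IsClosed s₁ :=
    (Metric.isClosed_sphere).inter (isClosed_le continuous_const (hcoord 2))
  have hs₂c : IsClosed s₂ :=
    (Metric.isClosed_sphere).inter (isClosed_le (hcoord 2) continuous_const)
  have hunion : s₁ ∪ s₂ = Metric.sphere (0:E3) 1 := by
    apply Set.Subset.antisymm
    · rintro x (hx | hx) <;> exact hx.1
    · intro x hx
      rcases le_total 0 (x 2) with h | h
      · exact Or.inl ⟨hx, h⟩
      · exact Or.inr ⟨hx, h⟩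
  have hf1 : ∀ x ∈ s₁, Complex.exp (h₁ (pl x)) = g x := by
    rintro x ⟨hx, hx2⟩
    rw [h₁e _ (hplK x hx), lft_pl 1 (by norm_num) x hx (by rw [one_mul, _root_.abs_of_nonneg hx2])]
  have hf2 : ∀ x ∈ s₂, Complex.exp (h₂ (pl x) + c) = g x := by
    rintro x ⟨hx, hx2⟩
    rw [Complex.exp_add, hexpc, mul_one, h₂e _ (hplK x hx),
      lft_pl (-1) (by norm_num) x hx (by rw [neg_one_mul, _root_.abs_of_nonpos hx2])]
  have hagree : ∀ x ∈ s₁ ∩ s₂, h₁ (pl x) = h₂ (pl x) + c := by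
    rintro x ⟨⟨hx, hx1⟩, ⟨-, hx2⟩⟩
    have hxeq : x ∈ eqt := ⟨hx, le_antisymm hx2 hx1⟩
    have hd := hdall x hxeq
    rw [← hd]; ring
  classical
  refine ⟨fun x => if 0 ≤ x 2 then h₁ (pl x) else h₂ (pl x) + c, ?_, ?_⟩
  · rw [← hunion]
    have hmaps₁ : Set.MapsTo pl s₁ Kd := fun x hx => hplK x hx.1
    have hmaps₂ : Set.MapsTo pl s₂ Kd := fun x hx => hplK x hx.1
    apply glue_aux hs₁c hs₂c
      (h₁c.comp pl_cont.continuousOn hmaps₁)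
      ((h₂c.comp pl_cont.continuousOn hmaps₂).add continuousOn_const)
      hagree (fun x => 0 ≤ x 2)
    · rintro x (hx | hx) hpx
      · exact hx
      · exact ⟨hx.1, hpx⟩
    · rintro x (hx | hx) hpx
      · exact ⟨hx.1, le_of_not_ge hpx⟩
      · exact hx
  · intro x hx
    by_cases hpx : 0 ≤ x 2
    · simp only [if_pos hpx]; exact hf1 x ⟨hx, hpx⟩
    · simp only [if_neg hpx]; exact hf2 x ⟨hx, le_of_not_ge hpx⟩
end

/-- **Unicoherence of the 2-sphere.**
If `A` and `B` are closed connected subsets of the unit sphere `S²` in `ℝ³`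
with `A ∪ B = S²`, then `A ∩ B` is connected. -/
theorem sphere_unicoherent
    (S2 : Set (EuclideanSpace ℝ (Fin 3)))
    (hS2 : S2 = Metric.sphere (0 : EuclideanSpace ℝ (Fin 3)) 1)
    (A B : Set (EuclideanSpace ℝ (Fin 3)))
    (hAc : IsClosed A) (hBc : IsClosed B)
    (hAconn : IsConnected A) (hBconn : IsConnected B)
    (hAS : A ⊆ S2) (hBS : B ⊆ S2)
    (hcover : A ∪ B = S2) :
    IsConnected (A ∩ B) := by
  subst hS2
  classical
  have hrank : 1 < Module.rank ℝ E3 := by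
    rw [← Module.finrank_eq_rank ℝ E3]
    have h3 : Module.finrank ℝ E3 = 3 := by
      simp [finrank_euclideanSpace]
    rw [h3]
    norm_num
  have hSconn : IsPreconnected (Metric.sphere (0:E3) 1) := isPreconnected_sphere hrank 0 1
  obtain ⟨a, haA⟩ := hAconn.nonempty
  obtain ⟨b, hbB⟩ := hBconn.nonempty
  have hABne : (A ∩ B).Nonempty := by
    have := (isPreconnected_closed_iff.mp hSconn) A B hAc hBc
      (by rw [hcover]) ⟨a, hAS haA, haA⟩ ⟨b, hBS hbB, hbB⟩
    obtain ⟨x, _, hx⟩ := this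
    exact ⟨x, hx⟩
  refine ⟨hABne, ?_⟩
  by_contra hnc
  rw [isPreconnected_closed_iff] at hnc
  push_neg at hnc
  obtain ⟨t, t', htc, ht'c, hsub, hne1, hne2, hempty⟩ := hnc
  set F₀ : Set E3 := (A ∩ B) ∩ t with hF₀
  set F₁ : Set E3 := (A ∩ B) ∩ t' with hF₁
  have hF₀c : IsClosed F₀ := (hAc.inter hBc).inter htc
  have hF₁c : IsClosed F₁ := (hAc.inter hBc).inter ht'c
  have hdisj : Disjoint F₀ F₁ := by
    rw [Set.disjoint_iff_inter_eq_empty]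
    rw [← hempty]
    ext x; constructor
    · rintro ⟨⟨hab, ht⟩, ⟨-, ht'⟩⟩; exact ⟨hab, ht, ht'⟩
    · rintro ⟨hab, ht, ht'⟩; exact ⟨⟨hab, ht⟩, hab, ht'⟩
  have hcoverF : F₀ ∪ F₁ = A ∩ B := by
    apply Set.Subset.antisymm
    · rintro x (⟨h, -⟩ | ⟨h, -⟩) <;> exact h
    · intro x hx
      rcases hsub hx with h | h
      · exact Or.inl ⟨hx, h⟩
      · exact Or.inr ⟨hx, h⟩
  obtain ⟨u, hu0, hu1, hurange⟩ := exists_continuous_zero_one_of_isClosed hF₀c hF₁c hdisj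
  -- the glued circle-valued map
  set g : E3 → ℂ := fun x => if x ∈ A then Complex.exp ((↑(π * u x) : ℂ) * Complex.I)
    else Complex.exp (-(↑(π * u x) : ℂ) * Complex.I) with hgdef
  have hnorm1 : ∀ r : ℝ, ‖Complex.exp ((r:ℂ) * Complex.I)‖ = 1 := by
    intro r
    rw [Complex.norm_exp_ofReal_mul_I]
  have hnorm : ∀ x ∈ Metric.sphere (0:E3) 1, ‖g x‖ = 1 := by
    intro x _
    rw [hgdef]
    by_cases hx : x ∈ A
    · simp only [if_pos hx]; exact hnorm1 _
    · simp only [if_neg hx]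
      rw [show -(↑(π * u x) : ℂ) * Complex.I = (↑(-(π * u x)) : ℂ) * Complex.I by push_cast; ring]
      exact hnorm1 _
  have hc1 : Continuous fun x : E3 => Complex.exp ((↑(π * u x) : ℂ) * Complex.I) :=
    Complex.continuous_exp.comp ((Complex.continuous_ofReal.comp
      (continuous_const.mul u.continuous)).mul continuous_const)
  have hc2 : Continuous fun x : E3 => Complex.exp (-(↑(π * u x) : ℂ) * Complex.I) :=
    Complex.continuous_exp.comp (((Complex.continuous_ofReal.comp
      (continuous_const.mul u.continuous)).neg).mul continuous_const)
  have hagree : ∀ x ∈ A ∩ B, Complex.exp ((↑(π * u x) : ℂ) * Complex.I)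
      = Complex.exp (-(↑(π * u x) : ℂ) * Complex.I) := by
    intro x hx
    rw [← hcoverF] at hx
    rcases hx with hx | hx
    · have h0 : u x = 0 := hu0 hx
      rw [h0]
      norm_num
    · have h1 : u x = 1 := hu1 hx
      rw [h1, mul_one]
      rw [Complex.exp_pi_mul_I, neg_mul, Complex.exp_neg, Complex.exp_pi_mul_I]
      norm_num
  have hgc : ContinuousOn g (Metric.sphere (0:E3) 1) := by
    rw [← hcover]
    apply glue_aux hAc hBc hc1.continuousOn hc2.continuousOn hagree (fun x => x ∈ A)
    · intro x _ hx; exact hx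
    · rintro x (hx | hx) hnx
      · exact absurd hx hnx
      · exact hx
  obtain ⟨h, hhc, hhe⟩ := exists_log_sphere hgc hnorm
  have hASs : A ⊆ Metric.sphere (0:E3) 1 := hcover ▸ hAS
  have hBSs : B ⊆ Metric.sphere (0:E3) 1 := hcover ▸ hBS
  -- on A : h - iπu has exp = 1
  have hA1 : ∀ x ∈ A, Complex.exp (h x - (↑(π * u x) : ℂ) * Complex.I) = 1 := by
    intro x hx
    rw [Complex.exp_sub, hhe x (hASs hx), hgdef]
    simp only [if_pos hx]
    exact div_self (Complex.exp_ne_zero _)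
  have hB1 : ∀ x ∈ B, Complex.exp (h x + (↑(π * u x) : ℂ) * Complex.I) = 1 := by
    intro x hx
    by_cases hxA : x ∈ A
    · have hx1 : Complex.exp (h x) = Complex.exp (-(↑(π * u x) : ℂ) * Complex.I) := by
        rw [hhe x (hBSs hx), hgdef]
        simp only [if_pos hxA]
        exact hagree x ⟨hxA, hx⟩
      rw [Complex.exp_add, hx1, ← Complex.exp_add, neg_mul, neg_add_cancel, Complex.exp_zero]
    · rw [Complex.exp_add, hhe x (hBSs hx), hgdef]
      simp only [if_neg hxA]
      rw [← Complex.exp_add, neg_mul, neg_add_cancel, Complex.exp_zero]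
  have hφAc : ContinuousOn (fun x => h x - (↑(π * u x) : ℂ) * Complex.I) A :=
    (hhc.mono hASs).sub ((Complex.continuous_ofReal.comp
      (continuous_const.mul u.continuous)).mul continuous_const).continuousOn
  have hφBc : ContinuousOn (fun x => h x + (↑(π * u x) : ℂ) * Complex.I) B :=
    (hhc.mono hBSs).add ((Complex.continuous_ofReal.comp
      (continuous_const.mul u.continuous)).mul continuous_const).continuousOn
  have hcA := const_of_exp_eq_one hAconn.isPreconnected hφAc hA1
  have hcB := const_of_exp_eq_one hBconn.isPreconnected hφBc hB1
  obtain ⟨x₀, hx₀⟩ := hne1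
  obtain ⟨x₁, hx₁⟩ := hne2
  have hx₀AB : x₀ ∈ A ∩ B := hx₀.1
  have hx₁AB : x₁ ∈ A ∩ B := hx₁.1
  have hu₀ : u x₀ = 0 := hu0 hx₀
  have hu₁ : u x₁ = 1 := hu1 hx₁
  have eA := hcA x₁ hx₁AB.1 x₀ hx₀AB.1
  have eB := hcB x₁ hx₁AB.2 x₀ hx₀AB.2
  rw [hu₀, hu₁] at eA eB
  have eA' : h x₁ - ↑π * Complex.I = h x₀ := by simpa using eA
  have eB' : h x₁ + ↑π * Complex.I = h x₀ := by simpa using eB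
  have hzero : (↑π * Complex.I : ℂ) = 0 := by linear_combination (eB' - eA') / 2
  exact mul_ne_zero (Complex.ofReal_ne_zero.mpr Real.pi_ne_zero) Complex.I_ne_zero hzero
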